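/- (de Finetti representation of the Curie-Weiss measure) Let β > 0, M ∈ ℕ, and let ℙ_β^M be the Curie-Weiss measure on {−1,1}^M, i.e. ℙ_β^M(x_1,…,x_M) = Z_{β,M}^{−1}·e^{(β/(2M))·(∑_{i=1}^M x_i)²} with normalizing constant Z_{β,M}. Then for every function φ : {−1,1}^M → ℝ, E_{ℙ_β^M}(φ) = Z^{−1} ∫_{−1}^{1} E_t(φ) · e^{−M·F_β(t)/2}·(1−t²)^{−1} dt, where Z := ∫_{−1}^{1} e^{−M·F_β(t)/2}·(1−t²)^{−1} dt and E_t denotes expectation with respect to the product measure P_t^{(M)}. -/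

import Mathlib

open MeasureTheory

/-- The function `F_β`. -/
noncomputable def Fbeta (β t : ℝ) : ℝ :=
  1 / β * (1 / 2 * Real.log ((1 + t) / (1 - t))) ^ 2 + Real.log (1 - t ^ 2)

/-- The spin value `±1` associated with a Boolean. -/
def sgn (b : Bool) : ℝ := if b then 1 else -1

namespace CWaux

/-- `artanh`. -/
noncomputable def A (t : ℝ) : ℝ := 1 / 2 * Real.log ((1 + t) / (1 - t))

/-- `tanh` written via `exp`. -/
noncomputable def T (u : ℝ) : ℝ := (Real.exp (2 * u) - 1) / (Real.exp (2 * u) + 1)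

lemma T_A {t : ℝ} (ht : t ∈ Set.Ioo (-1 : ℝ) 1) : T (A t) = t := by
  obtain ⟨ht1, ht2⟩ := ht
  have h1 : (0 : ℝ) < 1 + t := by linarith
  have h2 : (0 : ℝ) < 1 - t := by linarith
  have he : Real.exp (2 * A t) = (1 + t) / (1 - t) := by
    rw [A, show 2 * (1 / 2 * Real.log ((1 + t) / (1 - t))) = Real.log ((1 + t) / (1 - t)) by ring,
      Real.exp_log (div_pos h1 h2)]
  rw [T, he]
  have hd2 : (1 + t) / (1 - t) + 1 ≠ 0 := by
    rw [div_add' _ _ _ h2.ne']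
    positivity
  rw [div_eq_iff hd2]
  field_simp
  ring

lemma A_T (u : ℝ) : A (T u) = u := by
  have he : (0 : ℝ) < Real.exp (2 * u) := Real.exp_pos _
  have hd : (0 : ℝ) < Real.exp (2 * u) + 1 := by linarith
  have h1 : (1 + T u) / (1 - T u) = Real.exp (2 * u) := by
    rw [T]
    field_simp
    ring
  rw [A, h1, Real.log_exp]
  ring

lemma T_mem (u : ℝ) : T u ∈ Set.Ioo (-1 : ℝ) 1 := by
  have he : (0 : ℝ) < Real.exp (2 * u) := Real.exp_pos _
  have hd : (0 : ℝ) < Real.exp (2 * u) + 1 := by linarith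
  constructor
  · rw [T, lt_div_iff₀ hd]; nlinarith
  · rw [T, div_lt_iff₀ hd]; nlinarith

lemma A_image : A '' Set.Ioo (-1 : ℝ) 1 = Set.univ := by
  ext u
  simp only [Set.mem_image, Set.mem_univ, iff_true]
  exact ⟨T u, T_mem u, A_T u⟩

lemma A_inj : Set.InjOn A (Set.Ioo (-1 : ℝ) 1) := fun a ha b hb h => by
  rw [← T_A ha, ← T_A hb, h]

lemma A_deriv {t : ℝ} (ht : t ∈ Set.Ioo (-1 : ℝ) 1) :
    HasDerivWithinAt A (1 / (1 - t ^ 2)) (Set.Ioo (-1 : ℝ) 1) t := by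
  obtain ⟨ht1, ht2⟩ := ht
  have h1 : (0 : ℝ) < 1 + t := by linarith
  have h2 : (0 : ℝ) < 1 - t := by linarith
  have d1 : HasDerivAt (fun y : ℝ => Real.log (1 + y)) (1 / (1 + t)) t := by
    have := (Real.hasDerivAt_log h1.ne').comp t ((hasDerivAt_id t).const_add 1)
    simpa [Function.comp_def] using this
  have d2 : HasDerivAt (fun y : ℝ => Real.log (1 - y)) (-(1 / (1 - t))) t := by
    have := (Real.hasDerivAt_log h2.ne').comp t ((hasDerivAt_id t).const_sub 1)
    simpa [Function.comp_def] using this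
  have hd : HasDerivAt (fun y : ℝ => 1 / 2 * (Real.log (1 + y) - Real.log (1 - y)))
      (1 / (1 - t ^ 2)) t := by
    have := (d1.sub d2).const_mul (1 / 2 : ℝ)
    have h3 : (0 : ℝ) < 1 - t ^ 2 := by nlinarith
    refine this.congr_deriv ?_
    rw [show (1 : ℝ) - t ^ 2 = (1 + t) * (1 - t) by ring]
    field_simp
    ring
  refine hd.hasDerivWithinAt.congr (fun y hy => ?_) ?_
  · obtain ⟨hy1, hy2⟩ := hy
    have k1 : (0 : ℝ) < 1 + y := by linarith
    have k2 : (0 : ℝ) < 1 - y := by linarith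
    rw [A, Real.log_div k1.ne' k2.ne']
  · rw [A, Real.log_div h1.ne' h2.ne']

lemma factor_eq {t : ℝ} (ht : t ∈ Set.Ioo (-1 : ℝ) 1) (b : Bool) :
    (if b then (1 + t) / 2 else (1 - t) / 2) =
      1 / 2 * Real.exp (A t * sgn b + 1 / 2 * Real.log (1 - t ^ 2)) := by
  obtain ⟨ht1, ht2⟩ := ht
  have h1 : (0 : ℝ) < 1 + t := by linarith
  have h2 : (0 : ℝ) < 1 - t := by linarith
  have hl : Real.log (1 - t ^ 2) = Real.log (1 + t) + Real.log (1 - t) := by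
    rw [show (1 : ℝ) - t ^ 2 = (1 + t) * (1 - t) by ring, Real.log_mul h1.ne' h2.ne']
  have hA : A t = 1 / 2 * (Real.log (1 + t) - Real.log (1 - t)) := by
    rw [A, Real.log_div h1.ne' h2.ne']
  cases b with
  | true =>
    simp only [sgn, if_true]
    rw [show A t * 1 + 1 / 2 * Real.log (1 - t ^ 2) = Real.log (1 + t) by rw [hA, hl]; ring,
      Real.exp_log h1]
    ring
  | false =>
    simp only [sgn, Bool.false_eq_true, if_false]
    rw [show A t * (-1) + 1 / 2 * Real.log (1 - t ^ 2) = Real.log (1 - t) by rw [hA, hl]; ring,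
      Real.exp_log h2]
    ring

end CWaux

open CWaux

set_option maxHeartbeats 1000000

/-- de Finetti representation of the Curie-Weiss measure: for every `φ : {-1,1}^M → ℝ`,
`E_{ℙ_β^M}(φ) = Z⁻¹ ∫_{-1}^1 E_t(φ) e^{-M F_β(t)/2} (1-t²)^{-1} dt`, where
`E_t` is the expectation with respect to the product measure `P_t^{(M)}` and
`Z = ∫_{-1}^1 e^{-M F_β(t)/2} (1-t²)^{-1} dt`. -/
theorem de_finetti_curie_weiss (β : ℝ) (hβ : 0 < β) (M : ℕ) (hM : 1 ≤ M)
    (φ : (Fin M → ℝ) → ℝ) :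
    (∑ x : Fin M → Bool,
          Real.exp (β / (2 * M) * (∑ i, sgn (x i)) ^ 2) * φ (fun i => sgn (x i))) /
        (∑ x : Fin M → Bool, Real.exp (β / (2 * M) * (∑ i, sgn (x i)) ^ 2)) =
      (∫ t in Set.Ioo (-1 : ℝ) 1,
          (∑ x : Fin M → Bool,
              (∏ i, if x i then (1 + t) / 2 else (1 - t) / 2) * φ (fun i => sgn (x i))) *
            (Real.exp (-(M * Fbeta β t) / 2) / (1 - t ^ 2))) /
        (∫ t in Set.Ioo (-1 : ℝ) 1, Real.exp (-(M * Fbeta β t) / 2) / (1 - t ^ 2)) := by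
  classical
  have hM0 : (0 : ℝ) < (M : ℝ) := by exact_mod_cast hM
  have hb : (0 : ℝ) < (M : ℝ) / (2 * β) := by positivity
  -- notation
  set S : (Fin M → Bool) → ℝ := fun x => ∑ i, sgn (x i) with hS
  set P : (Fin M → Bool) → ℝ → ℝ :=
    fun x t => ∏ i, if x i then (1 + t) / 2 else (1 - t) / 2 with hP
  set w : ℝ → ℝ := fun t => Real.exp (-(M * Fbeta β t) / 2) / (1 - t ^ 2) with hw
  set h : (Fin M → Bool) → ℝ → ℝ :=
    fun x u => (1 / 2 : ℝ) ^ M * Real.exp (u * S x - (M : ℝ) / (2 * β) * u ^ 2) with hh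
  -- completed square form of h
  have hsq : ∀ x, h x = fun u =>
      ((1 / 2 : ℝ) ^ M * Real.exp (β * (S x) ^ 2 / (2 * M))) *
        Real.exp (-((M : ℝ) / (2 * β)) * (u - β * S x / M) ^ 2) := by
    intro x
    funext u
    have harg : u * S x - (M : ℝ) / (2 * β) * u ^ 2 =
        β * (S x) ^ 2 / (2 * M) + -((M : ℝ) / (2 * β)) * (u - β * S x / M) ^ 2 := by
      field_simp
      ring
    show (1 / 2 : ℝ) ^ M * Real.exp (u * S x - (M : ℝ) / (2 * β) * u ^ 2) = _
    rw [harg, Real.exp_add]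
    ring
  set I : ℝ := ∫ u : ℝ, Real.exp (-((M : ℝ) / (2 * β)) * u ^ 2) with hI
  have hIpos : 0 < I := by
    rw [hI, integral_gaussian]
    have : (0 : ℝ) < Real.pi / ((M : ℝ) / (2 * β)) := by positivity
    exact Real.sqrt_pos.mpr this
  have hint : ∀ x, Integrable (h x) := by
    intro x
    rw [hsq x]
    exact (((integrable_exp_neg_mul_sq hb).comp_sub_right (β * S x / M)).const_mul _)
  have hval : ∀ x, ∫ u : ℝ, h x u =
      ((1 / 2 : ℝ) ^ M * Real.exp (β * (S x) ^ 2 / (2 * M))) * I := by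
    intro x
    rw [hsq x, integral_const_mul]
    congr 1
    exact integral_sub_right_eq_self (fun u => Real.exp (-((M : ℝ) / (2 * β)) * u ^ 2))
      (β * S x / M)
  -- pointwise change of variables identity
  have hpt : ∀ x, ∀ t ∈ Set.Ioo (-1 : ℝ) 1,
      |1 / (1 - t ^ 2)| • h x (A t) = P x t * w t := by
    intro x t ht
    obtain ⟨ht1, ht2⟩ := ht
    have h2 : (0 : ℝ) < 1 - t ^ 2 := by nlinarith
    have hprod : P x t = (1 / 2 : ℝ) ^ M *
        Real.exp (A t * S x + (M : ℝ) * (1 / 2 * Real.log (1 - t ^ 2))) := by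
      rw [hP]
      calc (∏ i, if x i then (1 + t) / 2 else (1 - t) / 2)
          = ∏ i, (1 / 2 * Real.exp (A t * sgn (x i) + 1 / 2 * Real.log (1 - t ^ 2))) :=
            Finset.prod_congr rfl fun i _ => factor_eq ⟨ht1, ht2⟩ (x i)
        _ = (1 / 2 : ℝ) ^ M *
            Real.exp (∑ i, (A t * sgn (x i) + 1 / 2 * Real.log (1 - t ^ 2))) := by
            rw [Finset.prod_mul_distrib, Finset.prod_const, ← Real.exp_sum]
            simp
        _ = _ := by
            rw [Finset.sum_add_distrib, ← Finset.mul_sum, Finset.sum_const]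
            simp only [Finset.card_univ, Fintype.card_fin, nsmul_eq_mul, hS]
    have hF : Fbeta β t = 1 / β * (A t) ^ 2 + Real.log (1 - t ^ 2) := rfl
    have hexp : Real.exp (A t * S x + (M : ℝ) * (1 / 2 * Real.log (1 - t ^ 2))) *
        Real.exp (-((M : ℝ) * (1 / β * (A t) ^ 2 + Real.log (1 - t ^ 2))) / 2) =
        Real.exp (A t * S x - (M : ℝ) / (2 * β) * (A t) ^ 2) := by
      rw [← Real.exp_add]
      congr 1
      field_simp
      ring
    rw [abs_of_pos (by positivity : (0 : ℝ) < 1 / (1 - t ^ 2)), smul_eq_mul, hprod]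
    simp only [hh, hw]
    rw [hF, ← hexp]
    field_simp
  -- substitution: ∫_{Ioo} P x * w = ∫ h x
  have hsub : ∀ x, ∫ t in Set.Ioo (-1 : ℝ) 1, P x t * w t = ∫ u : ℝ, h x u := by
    intro x
    have := integral_image_eq_integral_abs_deriv_smul measurableSet_Ioo
      (fun t ht => A_deriv ht) A_inj (h x)
    rw [A_image, Measure.restrict_univ] at this
    rw [this]
    exact setIntegral_congr_fun measurableSet_Ioo fun t ht => (hpt x t ht).symm
  -- integrability of each summand
  have hgint : ∀ x, IntegrableOn (fun t => P x t * w t) (Set.Ioo (-1 : ℝ) 1) := by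
    intro x
    have hiff := integrableOn_image_iff_integrableOn_abs_deriv_smul measurableSet_Ioo
      (fun t ht => A_deriv ht) A_inj (h x)
    rw [A_image] at hiff
    have h1 : IntegrableOn (h x) Set.univ := (hint x).integrableOn
    exact (hiff.mp h1).congr_fun (fun t ht => hpt x t ht) measurableSet_Ioo
  -- sum of products is 1
  have hsum1 : ∀ t : ℝ, (∑ x : Fin M → Bool, P x t) = 1 := by
    intro t
    rw [hP, ← Fintype.prod_sum (fun (_ : Fin M) (b : Bool) => if b then (1 + t) / 2 else (1 - t) / 2)]
    have : ∀ i : Fin M, (∑ b : Bool, if b then (1 + t) / 2 else (1 - t) / 2) = 1 := by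
      intro i
      rw [Fintype.sum_bool]
      norm_num
      ring
    calc (∏ _i : Fin M, ∑ b : Bool, if b then (1 + t) / 2 else (1 - t) / 2)
        = ∏ _i : Fin M, (1 : ℝ) := Finset.prod_congr rfl fun i _ => this i
      _ = 1 := Finset.prod_const_one
  -- value of each summand integral
  have hgval : ∀ x, ∫ t in Set.Ioo (-1 : ℝ) 1, P x t * w t =
      ((1 / 2 : ℝ) ^ M * I) * Real.exp (β / (2 * M) * (S x) ^ 2) := by
    intro x
    rw [hsub x, hval x]
    rw [show β * (S x) ^ 2 / (2 * M) = β / (2 * M) * (S x) ^ 2 by ring]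
    ring
  set C : ℝ := (1 / 2 : ℝ) ^ M * I with hC
  have hCpos : 0 < C := by positivity
  -- numerator
  have hnum : (∫ t in Set.Ioo (-1 : ℝ) 1,
      (∑ x : Fin M → Bool, P x t * φ (fun i => sgn (x i))) * w t) =
      C * ∑ x : Fin M → Bool,
        Real.exp (β / (2 * M) * (S x) ^ 2) * φ (fun i => sgn (x i)) := by
    have heq : ∀ t : ℝ, (∑ x : Fin M → Bool, P x t * φ (fun i => sgn (x i))) * w t =
        ∑ x : Fin M → Bool, (P x t * w t) * φ (fun i => sgn (x i)) := by
      intro t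
      rw [Finset.sum_mul]
      exact Finset.sum_congr rfl fun x _ => by ring
    rw [integral_congr_ae (Filter.Eventually.of_forall fun t => heq t),
      integral_finset_sum _ (fun x _ => (hgint x).mul_const _)]
    rw [Finset.mul_sum]
    exact Finset.sum_congr rfl fun x _ => by rw [integral_mul_const, hgval x]; ring
  -- denominator
  have hden : (∫ t in Set.Ioo (-1 : ℝ) 1, w t) =
      C * ∑ x : Fin M → Bool, Real.exp (β / (2 * M) * (S x) ^ 2) := by
    have heq : ∀ t : ℝ, w t = ∑ x : Fin M → Bool, P x t * w t := by
      intro t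
      rw [← Finset.sum_mul, hsum1 t, one_mul]
    rw [integral_congr_ae (Filter.Eventually.of_forall fun t => heq t),
      integral_finset_sum _ (fun x _ => hgint x)]
    rw [Finset.mul_sum]
    exact Finset.sum_congr rfl fun x _ => hgval x
  show _ = (∫ t in Set.Ioo (-1 : ℝ) 1,
      (∑ x : Fin M → Bool, P x t * φ (fun i => sgn (x i))) * w t) /
      (∫ t in Set.Ioo (-1 : ℝ) 1, w t)
  rw [hnum, hden, mul_div_mul_left _ _ hCpos.ne']
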